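/- Let V and E be finite types with source and range maps s, r : E → V and an involution γ ↦ γ̃ on E satisfying s(γ̃) = r(γ) and r(γ̃) = s(γ), let φ : V → ℝ be strictly positive, and fix a base vertex * ∈ V. For m ≥ 0 let Path_m denote the set of sequences (γ_1, …, γ_m) of edges with s(γ_1) = * and s(γ_{k+1}) = r(γ_k). For 1 ≤ i ≤ m+1 define the cup matrix M_{∪^{(i)}}, with rows indexed by Path_m and columns by Path_{m+2}, by (M_{∪^{(i)}})_{α,β} = √(φ(r(β_i))/φ(s(β_i))) if β_k = α_k for k < i, β_{i+1} = β̃_i, and β_{k+2} = α_k for k ≥ i, and 0 otherwise; set M_{∩^{(i)}} := (M_{∪^{(i)}})ᵀ. Then the cup–cap (zig-zag) simplifications hold: M_{∪^{(i+1)}} · M_{∩^{(i)}} = 1 and M_{∪^{(i)}} · M_{∩^{(i+1)}} = 1, the identity matrix on Path_m. -/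

import Mathlib

open Matrix

/-- Paths of length `n` on a graph with edge set `E`, source/range maps `s, r`,
starting at the base vertex `v₀`. -/
abbrev GraphPath {V E : Type*} (s r : E → V) (v₀ : V) (n : ℕ) : Type _ :=
  {γ : Fin n → E //
    (∀ hn : 0 < n, s (γ ⟨0, hn⟩) = v₀) ∧
    ∀ (k : ℕ) (hk : k + 1 < n), s (γ ⟨k + 1, hk⟩) = r (γ ⟨k, Nat.lt_of_succ_lt hk⟩)}

private lemma fem {n : ℕ} {X : Type*} (f : Fin n → X) (j j' : ℕ) (h : j < n) (h' : j' < n)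
    (e : j = j') : f ⟨j, h⟩ = f ⟨j', h'⟩ := by subst e; rfl

/-- Insert the pair `(rev a_{i-1}, a_{i-1})` into `a` at position `i` (0-based). -/
def bfunAux {E : Type*} (rev : E → E) (m i : ℕ) (hi1 : 1 ≤ i) (hi2 : i ≤ m)
    (a : Fin m → E) (k : Fin (m + 2)) : E :=
  if h1 : (k : ℕ) < i then a ⟨k, by omega⟩
  else if h2 : (k : ℕ) = i then rev (a ⟨i - 1, by omega⟩)
  else if h3 : (k : ℕ) = i + 1 then a ⟨i - 1, by omega⟩
  else a ⟨(k : ℕ) - 2, by omega⟩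

lemma bfunAux_lt {E : Type*} (rev : E → E) (m i : ℕ) (hi1 : 1 ≤ i) (hi2 : i ≤ m)
    (a : Fin m → E) (k : Fin (m + 2)) (h : (k : ℕ) < i) :
    bfunAux rev m i hi1 hi2 a k = a ⟨k, by omega⟩ := by
  unfold bfunAux; rw [dif_pos h]

lemma bfunAux_eq1 {E : Type*} (rev : E → E) (m i : ℕ) (hi1 : 1 ≤ i) (hi2 : i ≤ m)
    (a : Fin m → E) (k : Fin (m + 2)) (h : (k : ℕ) = i) :
    bfunAux rev m i hi1 hi2 a k = rev (a ⟨i - 1, by omega⟩) := by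
  unfold bfunAux; rw [dif_neg (by omega), dif_pos h]

lemma bfunAux_eq2 {E : Type*} (rev : E → E) (m i : ℕ) (hi1 : 1 ≤ i) (hi2 : i ≤ m)
    (a : Fin m → E) (k : Fin (m + 2)) (h : (k : ℕ) = i + 1) :
    bfunAux rev m i hi1 hi2 a k = a ⟨i - 1, by omega⟩ := by
  unfold bfunAux; rw [dif_neg (by omega), dif_neg (by omega), dif_pos h]

lemma bfunAux_gt {E : Type*} (rev : E → E) (m i : ℕ) (hi1 : 1 ≤ i) (hi2 : i ≤ m)
    (a : Fin m → E) (k : Fin (m + 2)) (h : i + 1 < (k : ℕ)) :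
    bfunAux rev m i hi1 hi2 a k = a ⟨(k : ℕ) - 2, by omega⟩ := by
  unfold bfunAux; rw [dif_neg (by omega), dif_neg (by omega), dif_neg (by omega)]

/-- The cup condition for `M_{∪^{(i)}}`. -/
abbrev CupCond {V E : Type*} (s r : E → V) (rev : E → E) (v₀ : V) (m i : ℕ)
    (hi1 : 1 ≤ i) (hi2 : i ≤ m + 1)
    (α : GraphPath s r v₀ m) (β : GraphPath s r v₀ (m + 2)) : Prop :=
  (∀ k : Fin m, (k : ℕ) + 1 < i → β.1 (Fin.castLE (show m ≤ m + 1 + 1 by omega) k) = α.1 k) ∧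
  β.1 ⟨i, show i < m + 1 + 1 by omega⟩ = rev (β.1 ⟨i - 1, show i - 1 < m + 1 + 1 by omega⟩) ∧
  (∀ k : Fin m, i ≤ (k : ℕ) + 1 → β.1 ⟨(k : ℕ) + 2, show (k : ℕ) + 2 < m + 1 + 1 by omega⟩ = α.1 k)

/-- the cup matrices `M_{∪^{(i)}}` (with caps `M_{∩^{(i)}} = M_{∪^{(i)}}ᵀ`)
satisfy the cup–cap (zig-zag) simplifications
`M_{∪^{(i+1)}} · M_{∩^{(i)}} = 1` and `M_{∪^{(i)}} · M_{∩^{(i+1)}} = 1`. -/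
theorem cup_cap_simplification {V E : Type*} [Fintype V] [Fintype E]
    (s r : E → V) (rev : E → E)
    (hrev : ∀ γ, rev (rev γ) = γ)
    (hsrev : ∀ γ, s (rev γ) = r γ) (hrrev : ∀ γ, r (rev γ) = s γ)
    (φ : V → ℝ) (hφ : ∀ v, 0 < φ v) (v₀ : V) (m : ℕ)
    [Fintype (GraphPath s r v₀ m)] [Fintype (GraphPath s r v₀ (m + 2))]
    [DecidableEq (GraphPath s r v₀ m)]
    (Mcup : ℕ → Matrix (GraphPath s r v₀ m) (GraphPath s r v₀ (m + 2)) ℝ)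
    (hM : ∀ (i : ℕ) (hi1 : 1 ≤ i) (hi2 : i ≤ m + 1)
        (α : GraphPath s r v₀ m) (β : GraphPath s r v₀ (m + 2)),
      (((∀ k : Fin m, (k : ℕ) + 1 < i → β.1 (Fin.castLE (by omega) k) = α.1 k) ∧
        β.1 ⟨i, by omega⟩ = rev (β.1 ⟨i - 1, by omega⟩) ∧
        (∀ k : Fin m, i ≤ (k : ℕ) + 1 → β.1 ⟨(k : ℕ) + 2, by omega⟩ = α.1 k)) →
          Mcup i α β =
            Real.sqrt (φ (r (β.1 ⟨i - 1, by omega⟩)) / φ (s (β.1 ⟨i - 1, by omega⟩)))) ∧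
      (¬ ((∀ k : Fin m, (k : ℕ) + 1 < i → β.1 (Fin.castLE (by omega) k) = α.1 k) ∧
          β.1 ⟨i, by omega⟩ = rev (β.1 ⟨i - 1, by omega⟩) ∧
          (∀ k : Fin m, i ≤ (k : ℕ) + 1 → β.1 ⟨(k : ℕ) + 2, by omega⟩ = α.1 k)) →
            Mcup i α β = 0)) :
    ∀ (i : ℕ), 1 ≤ i → i ≤ m →
      Mcup (i + 1) * (Mcup i)ᵀ = 1 ∧ Mcup i * (Mcup (i + 1))ᵀ = 1 := by
  intro i hi1 hi2
  -- abbreviations for the value / vanishing parts of `hM` at `i` and `i+1`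
  have hPval : ∀ α β, CupCond s r rev v₀ m i hi1 (by omega) α β →
      Mcup i α β =
        Real.sqrt (φ (r (β.1 ⟨i - 1, by omega⟩)) / φ (s (β.1 ⟨i - 1, by omega⟩))) :=
    fun α β h => (hM i hi1 (by omega) α β).1 h
  have hPzero : ∀ α β, Mcup i α β ≠ 0 → CupCond s r rev v₀ m i hi1 (by omega) α β := by
    intro α β h
    by_contra hc
    exact h ((hM i hi1 (by omega) α β).2 hc)
  have hQval : ∀ α β, CupCond s r rev v₀ m (i + 1) (by omega) (by omega) α β →
      Mcup (i + 1) α β =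
        Real.sqrt (φ (r (β.1 ⟨i, by omega⟩)) / φ (s (β.1 ⟨i, by omega⟩))) :=
    fun α β h => (hM (i + 1) (by omega) (by omega) α β).1 h
  have hQzero : ∀ α β, Mcup (i + 1) α β ≠ 0 →
      CupCond s r rev v₀ m (i + 1) (by omega) (by omega) α β := by
    intro α β h
    by_contra hc
    exact h ((hM (i + 1) (by omega) (by omega) α β).2 hc)
  -- the inserted path is again a path
  have hbpath : ∀ (α : GraphPath s r v₀ m),
      (∀ hn : 0 < m + 2, s (bfunAux rev m i hi1 hi2 α.1 ⟨0, hn⟩) = v₀) ∧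
      ∀ (k : ℕ) (hk : k + 1 < m + 2),
        s (bfunAux rev m i hi1 hi2 α.1 ⟨k + 1, hk⟩) =
          r (bfunAux rev m i hi1 hi2 α.1 ⟨k, Nat.lt_of_succ_lt hk⟩) := by
    intro α
    obtain ⟨h0, hstep⟩ := α.2
    refine ⟨?_, ?_⟩
    · intro hn
      rw [bfunAux_lt rev m i hi1 hi2 α.1 ⟨0, hn⟩ (show 0 < i by omega)]
      exact h0 (by omega)
    · intro k hk
      rcases Nat.lt_trichotomy (k + 1) i with h | h | h
      · rw [bfunAux_lt rev m i hi1 hi2 α.1 ⟨k + 1, hk⟩ h,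
            bfunAux_lt rev m i hi1 hi2 α.1 ⟨k, Nat.lt_of_succ_lt hk⟩ (show k < i by omega)]
        exact hstep k (by omega)
      · rw [bfunAux_eq1 rev m i hi1 hi2 α.1 ⟨k + 1, hk⟩ (show k + 1 = i by omega),
            bfunAux_lt rev m i hi1 hi2 α.1 ⟨k, Nat.lt_of_succ_lt hk⟩ (show k < i by omega),
            hsrev]
        exact congrArg r (fem α.1 (i - 1) k (by omega) (by omega) (by omega))
      · rcases Nat.lt_trichotomy (k + 1) (i + 1) with h2 | h2 | h2
        · omega
        · rw [bfunAux_eq2 rev m i hi1 hi2 α.1 ⟨k + 1, hk⟩ (show k + 1 = i + 1 by omega),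
              bfunAux_eq1 rev m i hi1 hi2 α.1 ⟨k, Nat.lt_of_succ_lt hk⟩ (show k = i by omega),
              hrrev]
        · rcases Nat.lt_trichotomy k (i + 2) with h3 | h3 | h3
          · -- k = i + 1
            rw [bfunAux_gt rev m i hi1 hi2 α.1 ⟨k + 1, hk⟩ (show i + 1 < k + 1 by omega : i + 1 < ((⟨k + 1, hk⟩ : Fin (m+2)) : ℕ)),
                bfunAux_eq2 rev m i hi1 hi2 α.1 ⟨k, Nat.lt_of_succ_lt hk⟩ (show k = i + 1 by omega)]
            exact (congrArg s (fem α.1 ((k + 1) - 2) ((i - 1) + 1)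
              (by omega) (by omega) (by omega))).trans (hstep (i - 1) (by omega))
          · -- k = i + 2
            rw [bfunAux_gt rev m i hi1 hi2 α.1 ⟨k + 1, hk⟩ (show i + 1 < k + 1 by omega : i + 1 < ((⟨k + 1, hk⟩ : Fin (m+2)) : ℕ)),
                bfunAux_gt rev m i hi1 hi2 α.1 ⟨k, Nat.lt_of_succ_lt hk⟩ (show i + 1 < k by omega)]
            exact (congrArg s (fem α.1 ((k + 1) - 2) ((k - 2) + 1)
              (by omega) (by omega) (by omega))).trans (hstep (k - 2) (by omega))
          · rw [bfunAux_gt rev m i hi1 hi2 α.1 ⟨k + 1, hk⟩ (show i + 1 < k + 1 by omega : i + 1 < ((⟨k + 1, hk⟩ : Fin (m+2)) : ℕ)),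
                bfunAux_gt rev m i hi1 hi2 α.1 ⟨k, Nat.lt_of_succ_lt hk⟩ (show i + 1 < k by omega)]
            exact (congrArg s (fem α.1 ((k + 1) - 2) ((k - 2) + 1)
              (by omega) (by omega) (by omega))).trans (hstep (k - 2) (by omega))
  -- the inserted path satisfies the cup condition at i
  have hPb : ∀ α, CupCond s r rev v₀ m i hi1 (by omega) α
      ⟨bfunAux rev m i hi1 hi2 α.1, hbpath α⟩ := by
    intro α
    refine ⟨?_, ?_, ?_⟩
    · intro k hk
      exact bfunAux_lt rev m i hi1 hi2 α.1 (Fin.castLE (by omega) k) (show (k : ℕ) < i by omega)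
    · exact (bfunAux_eq1 rev m i hi1 hi2 α.1 ⟨i, by omega⟩ rfl).trans
        (congrArg rev (bfunAux_lt rev m i hi1 hi2 α.1 ⟨i - 1, by omega⟩
          (show i - 1 < i by omega)).symm)
    · intro k hk
      rcases Nat.lt_or_ge i ((k : ℕ) + 1) with h | h
      · exact bfunAux_gt rev m i hi1 hi2 α.1 ⟨(k : ℕ) + 2, by omega⟩ (show i + 1 < (k : ℕ) + 2 by omega)
      · -- i = k + 1
        refine (fem (bfunAux rev m i hi1 hi2 α.1) ((k : ℕ) + 2) (i + 1)
          (by omega) (by omega) (by omega)).trans ?_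
        refine (bfunAux_eq2 rev m i hi1 hi2 α.1 ⟨i + 1, by omega⟩ rfl).trans ?_
        exact fem α.1 (i - 1) (k : ℕ) (by omega) k.2 (by omega)
  -- the inserted path satisfies the cup condition at i+1
  have hQb : ∀ α, CupCond s r rev v₀ m (i + 1) (by omega) (by omega) α
      ⟨bfunAux rev m i hi1 hi2 α.1, hbpath α⟩ := by
    intro α
    refine ⟨?_, ?_, ?_⟩
    · intro k hk
      exact bfunAux_lt rev m i hi1 hi2 α.1 (Fin.castLE (by omega) k) (show (k : ℕ) < i by omega)
    · exact (bfunAux_eq2 rev m i hi1 hi2 α.1 ⟨i + 1, by omega⟩ rfl).trans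
        ((hrev (α.1 ⟨i - 1, by omega⟩)).symm.trans
          (congrArg rev (bfunAux_eq1 rev m i hi1 hi2 α.1 ⟨i + 1 - 1, by omega⟩
            (show i + 1 - 1 = i by omega)).symm))
    · intro k hk
      exact bfunAux_gt rev m i hi1 hi2 α.1 ⟨(k : ℕ) + 2, by omega⟩ (show i + 1 < (k : ℕ) + 2 by omega)
  -- uniqueness of β given the two cup conditions
  have keyβ : ∀ (α α' : GraphPath s r v₀ m) (β : GraphPath s r v₀ (m + 2)),
      CupCond s r rev v₀ m (i + 1) (by omega) (by omega) α β →
      CupCond s r rev v₀ m i hi1 (by omega) α' β →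
      β.1 = bfunAux rev m i hi1 hi2 α.1 := by
    rintro α α' β ⟨A1, B1, C1⟩ ⟨A2, B2, C2⟩
    funext k
    obtain ⟨kv, hkv⟩ := k
    rcases Nat.lt_trichotomy kv i with h | h | h
    · rw [bfunAux_lt rev m i hi1 hi2 α.1 ⟨kv, hkv⟩ h]
      exact A1 ⟨kv, by omega⟩ (show kv + 1 < i + 1 by omega)
    · rw [show (⟨kv, hkv⟩ : Fin (m + 2)) = ⟨i, by omega⟩ from Fin.ext h,
          bfunAux_eq1 rev m i hi1 hi2 α.1 ⟨i, by omega⟩ rfl]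
      exact B2.trans (congrArg rev (A1 ⟨i - 1, by omega⟩ (show (i - 1) + 1 < i + 1 by omega)))
    · rcases Nat.lt_trichotomy kv (i + 1) with h2 | h2 | h2
      · omega
      · rw [show (⟨kv, hkv⟩ : Fin (m + 2)) = ⟨i + 1, by omega⟩ from Fin.ext h2,
            bfunAux_eq2 rev m i hi1 hi2 α.1 ⟨i + 1, by omega⟩ rfl]
        exact B1.trans ((congrArg rev B2).trans
          ((hrev _).trans (A1 ⟨i - 1, by omega⟩ (show (i - 1) + 1 < i + 1 by omega))))
      · rw [bfunAux_gt rev m i hi1 hi2 α.1 ⟨kv, hkv⟩ h2]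
        exact (fem β.1 kv ((kv - 2) + 2) hkv (by omega) (by omega)).trans
          (C1 ⟨kv - 2, by omega⟩ (show i + 1 ≤ (kv - 2) + 1 by omega))
  -- the two cup conditions force α' = α
  have keyα : ∀ (α α' : GraphPath s r v₀ m) (β : GraphPath s r v₀ (m + 2)),
      CupCond s r rev v₀ m (i + 1) (by omega) (by omega) α β →
      CupCond s r rev v₀ m i hi1 (by omega) α' β →
      α' = α := by
    rintro α α' β ⟨A1, B1, C1⟩ ⟨A2, B2, C2⟩
    apply Subtype.ext
    funext k
    obtain ⟨kv, hkv⟩ := k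
    rcases Nat.lt_trichotomy (kv + 1) i with h | h | h
    · exact (A2 ⟨kv, hkv⟩ h).symm.trans (A1 ⟨kv, hkv⟩ (show kv + 1 < i + 1 by omega))
    · refine (C2 ⟨kv, hkv⟩ (show i ≤ kv + 1 by omega)).symm.trans ?_
      refine (fem β.1 (kv + 2) (i + 1) (by omega) (by omega) (by omega)).trans ?_
      refine B1.trans ?_
      refine (congrArg rev B2).trans ?_
      refine (hrev _).trans ?_
      refine (fem β.1 (i - 1) kv (by omega) (by omega) (by omega)).trans ?_
      exact A1 ⟨kv, hkv⟩ (show kv + 1 < i + 1 by omega)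
    · exact (C2 ⟨kv, hkv⟩ (show i ≤ kv + 1 by omega)).symm.trans (C1 ⟨kv, hkv⟩ (show i + 1 ≤ kv + 1 by omega))
  -- the diagonal value is 1
  have hdiag : ∀ α, Mcup (i + 1) α ⟨bfunAux rev m i hi1 hi2 α.1, hbpath α⟩ *
      Mcup i α ⟨bfunAux rev m i hi1 hi2 α.1, hbpath α⟩ = 1 := by
    intro α
    set a : E := α.1 ⟨i - 1, by omega⟩ with ha
    have e1 : (⟨bfunAux rev m i hi1 hi2 α.1, hbpath α⟩ :
        GraphPath s r v₀ (m + 2)).1 ⟨i, by omega⟩ = rev a :=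
      bfunAux_eq1 rev m i hi1 hi2 α.1 ⟨i, by omega⟩ rfl
    have e2 : (⟨bfunAux rev m i hi1 hi2 α.1, hbpath α⟩ :
        GraphPath s r v₀ (m + 2)).1 ⟨i - 1, by omega⟩ = a :=
      bfunAux_lt rev m i hi1 hi2 α.1 ⟨i - 1, by omega⟩ (show i - 1 < i by omega)
    rw [hQval α _ (hQb α), hPval α _ (hPb α), e1, e2, hsrev, hrrev]
    have h1 : φ (s a) ≠ 0 := ne_of_gt (hφ _)
    have h2 : φ (r a) ≠ 0 := ne_of_gt (hφ _)
    rw [← Real.sqrt_mul (div_nonneg (hφ _).le (hφ _).le), div_mul_div_comm,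
        mul_comm (φ (s a)) (φ (r a)), div_self (mul_pos (hφ _) (hφ _)).ne', Real.sqrt_one]
  constructor
  · -- Mcup (i+1) * (Mcup i)ᵀ = 1
    ext α α'
    simp only [Matrix.mul_apply, Matrix.transpose_apply, Matrix.one_apply]
    by_cases hE : α = α'
    · subst hE
      rw [if_pos rfl]
      refine (Finset.sum_eq_single_of_mem
        (⟨bfunAux rev m i hi1 hi2 α.1, hbpath α⟩ : GraphPath s r v₀ (m + 2))
        (Finset.mem_univ _) ?_).trans (hdiag α)
      intro β _ hβ
      rcases eq_or_ne (Mcup (i + 1) α β) 0 with h | h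
      · rw [h, zero_mul]
      rcases eq_or_ne (Mcup i α β) 0 with h' | h'
      · rw [h', mul_zero]
      exact absurd (Subtype.ext (keyβ α α β (hQzero α β h) (hPzero α β h'))) hβ
    · rw [if_neg hE]
      apply Finset.sum_eq_zero
      intro β _
      rcases eq_or_ne (Mcup (i + 1) α β) 0 with h | h
      · rw [h, zero_mul]
      rcases eq_or_ne (Mcup i α' β) 0 with h' | h'
      · rw [h', mul_zero]
      exact absurd (keyα α α' β (hQzero α β h) (hPzero α' β h')).symm hE
  · -- Mcup i * (Mcup (i+1))ᵀ = 1
    ext α α'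
    simp only [Matrix.mul_apply, Matrix.transpose_apply, Matrix.one_apply]
    by_cases hE : α = α'
    · subst hE
      rw [if_pos rfl]
      refine (Finset.sum_eq_single_of_mem
        (⟨bfunAux rev m i hi1 hi2 α.1, hbpath α⟩ : GraphPath s r v₀ (m + 2))
        (Finset.mem_univ _) ?_).trans ((mul_comm _ _).trans (hdiag α))
      intro β _ hβ
      rcases eq_or_ne (Mcup i α β) 0 with h | h
      · rw [h, zero_mul]
      rcases eq_or_ne (Mcup (i + 1) α β) 0 with h' | h'
      · rw [h', mul_zero]
      exact absurd (Subtype.ext (keyβ α α β (hQzero α β h') (hPzero α β h))) hβ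
    · rw [if_neg hE]
      apply Finset.sum_eq_zero
      intro β _
      rcases eq_or_ne (Mcup i α β) 0 with h | h
      · rw [h, zero_mul]
      rcases eq_or_ne (Mcup (i + 1) α' β) 0 with h' | h'
      · rw [h', mul_zero]
      exact absurd (keyα α' α β (hQzero α' β h') (hPzero α β h)) hE
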